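/- (Bound on the marginal-likelihood functional below the true smoothness, used in Lemma 1.) For every σ, β, M > 0 there exist C > 0 and K > 0 such that for all integers m ≥ K and all reals n with n/m ≥ K the following holds: set k = n/(σ²·m) and let θ₀ ∈ ℓ² be defined by θ₀,ᵢ² = M²·i^{-1-2β} for all integers i ≥ (n/(σ²·√m))^{1/(1+2β)} and θ₀,ᵢ = 0 otherwise. Then for every α with 0 < α < β, h_k(α) := ((1+2α)/(k^{1/(1+2α)}·log k))·Σ_{i=1}^∞ k²·i^{1+2α}·θ₀,ᵢ²·(log i)/(k + i^{1+2α})² ≤ C·M². -/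

import Mathlib

/-- The squared coefficients of the 'difficult' signal: `θ₀,ᵢ² = M² i^{-1-2β}` for
integers `i ≥ (n/(σ²√m))^{1/(1+2β)}` and `θ₀,ᵢ = 0` otherwise (coordinate `i : ℕ`
corresponds to the integer `i + 1`). -/
noncomputable def counterSignalSq (σ β M n : ℝ) (m : ℕ) (i : ℕ) : ℝ :=
  if (n / (σ ^ 2 * Real.sqrt (m : ℝ))) ^ (1 / (1 + 2 * β)) ≤ (i : ℝ) + 1 then
    M ^ 2 * ((i : ℝ) + 1) ^ (-1 - 2 * β)
  else 0

/-- The marginal-likelihood functional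
`h_k(α) = ((1+2α)/(k^{1/(1+2α)} log k)) Σᵢ k² i^{1+2α} θ₀,ᵢ² (log i)/(k + i^{1+2α})²`. -/
noncomputable def hFun (σ β M n : ℝ) (m : ℕ) (α : ℝ) : ℝ :=
  let k := n / (σ ^ 2 * (m : ℝ))
  ((1 + 2 * α) / (k ^ (1 / (1 + 2 * α)) * Real.log k)) *
    ∑' i : ℕ, k ^ 2 * ((i : ℝ) + 1) ^ (1 + 2 * α) * counterSignalSq σ β M n m i
      * Real.log ((i : ℝ) + 1) / (k + ((i : ℝ) + 1) ^ (1 + 2 * α)) ^ 2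

set_option maxHeartbeats 1000000

private lemma aux_step_ineq {a s : ℝ} (ha : 0 < a) (hs : 0 < s) :
    (a + 1) ^ (-1 - s) ≤ (1 / s) * (a ^ (-s) - (a + 1) ^ (-s)) := by
  have hb : (0:ℝ) < a + 1 := by linarith
  have hx0 : 0 < a / (a + 1) := div_pos ha hb
  have hx1 : a / (a + 1) < 1 := (div_lt_one hb).2 (by linarith)
  have hxs : 0 < (a / (a + 1)) ^ (-s) := Real.rpow_pos_of_pos hx0 _
  have hlog1 : Real.log ((a / (a + 1)) ^ (-s)) ≤ (a / (a + 1)) ^ (-s) - 1 :=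
    Real.log_le_sub_one_of_pos hxs
  have hlog2 : Real.log (a / (a + 1)) ≤ a / (a + 1) - 1 := Real.log_le_sub_one_of_pos hx0
  have hlogr : Real.log ((a / (a + 1)) ^ (-s)) = (-s) * Real.log (a / (a + 1)) :=
    Real.log_rpow hx0 _
  have key : s * (1 - a / (a + 1)) ≤ (a / (a + 1)) ^ (-s) - 1 := by nlinarith
  have hax : a = (a + 1) * (a / (a + 1)) := by field_simp
  have h1 : a ^ (-s) = (a + 1) ^ (-s) * (a / (a + 1)) ^ (-s) := by
    rw [← Real.mul_rpow hb.le hx0.le, ← hax]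
  have hinv : (a + 1)⁻¹ = 1 - a / (a + 1) := by field_simp; ring
  have h2 : (a + 1) ^ (-1 - s) = (a + 1) ^ (-s) * (1 - a / (a + 1)) := by
    have he : (-1 - s : ℝ) = -s + -1 := by ring
    rw [he, Real.rpow_add hb, Real.rpow_neg_one, hinv]
  have hbs : 0 < (a + 1) ^ (-s) := Real.rpow_pos_of_pos hb _
  rw [h1, h2, one_div_mul_eq_div, le_div_iff₀ hs]
  nlinarith [mul_le_mul_of_nonneg_left key hbs.le]

/-- Log growth: if `log a ≥ 1/s` and `0 < a ≤ b` then `log b ≤ log a * (b/a)^s`. -/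
private lemma aux_log_growth {s a b : ℝ} (hs : 0 < s) (ha : 1 / s ≤ Real.log a)
    (ha0 : 0 < a) (hab : a ≤ b) : Real.log b ≤ Real.log a * (b / a) ^ s := by
  have hb0 : 0 < b := lt_of_lt_of_le ha0 hab
  have hr0 : 0 < b / a := div_pos hb0 ha0
  have hr1 : 1 ≤ b / a := (one_le_div ha0).2 hab
  have hrs1 : 1 ≤ (b / a) ^ s := Real.one_le_rpow hr1 hs.le
  have hlb : Real.log b = Real.log a + Real.log (b / a) := by
    rw [Real.log_div (ne_of_gt hb0) (ne_of_gt ha0)]; ring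
  have h1 : Real.log ((b/a) ^ s) ≤ (b/a) ^ s - 1 :=
    Real.log_le_sub_one_of_pos (Real.rpow_pos_of_pos hr0 _)
  have h2 : Real.log ((b/a) ^ s) = s * Real.log (b/a) := Real.log_rpow hr0 _
  have hQ : s * Real.log (b/a) ≤ (b/a) ^ s - 1 := by rw [← h2]; exact h1
  have hsa : 1 ≤ Real.log a * s := (div_le_iff₀ hs).1 ha
  have hmul : 1 * ((b/a) ^ s - 1) ≤ (Real.log a * s) * ((b/a) ^ s - 1) :=
    mul_le_mul_of_nonneg_right hsa (by linarith)
  have hla : 0 < Real.log a := lt_of_lt_of_le (by positivity) ha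
  nlinarith [hQ, hmul]

/-- Antitone rpow in the base for nonpositive exponents (wrapper). -/
private lemma aux_rpow_anti {x y s : ℝ} (hx : 0 < x) (hxy : x ≤ y) (hs : 0 ≤ s) :
    y ^ (-s) ≤ x ^ (-s) :=
  Real.rpow_le_rpow_of_nonpos hx hxy (neg_nonpos.2 hs)

/-- Arbitrary finite sums of a nonneg sequence dominated by increments of `G`. -/
private lemma aux_finsum_bound {f G : ℕ → ℝ} (hf : ∀ i, 0 ≤ f i)
    (h : ∀ i, f i ≤ G i - G (i + 1)) (hG : ∀ i, 0 ≤ G i) (u : Finset ℕ) :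
    ∑ i ∈ u, f i ≤ G 0 := by
  obtain ⟨N, hN⟩ := u.exists_nat_subset_range
  calc ∑ i ∈ u, f i ≤ ∑ i ∈ Finset.range N, f i :=
        Finset.sum_le_sum_of_subset_of_nonneg hN (fun i _ _ => hf i)
    _ ≤ ∑ i ∈ Finset.range N, (G i - G (i + 1)) := Finset.sum_le_sum (fun i _ => h i)
    _ = G 0 - G N := Finset.sum_range_sub' G N
    _ ≤ G 0 := by linarith [hG N]

private lemma aux_ratio_le {k y : ℝ} (hk : 0 < k) (hy : 0 < y) :
    k ^ 2 * y / (k + y) ^ 2 ≤ k := by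
  have h : 0 < k + y := by linarith
  rw [div_le_iff₀ (pow_pos h 2)]
  nlinarith [mul_pos hk hy, mul_pos (mul_pos hk hk) hk, mul_pos hk (mul_pos hy hy)]

/-- The summand of the series in `hFun`. -/
private noncomputable def auxF (σ β M n : ℝ) (m : ℕ) (α : ℝ) (i : ℕ) : ℝ :=
  (n / (σ ^ 2 * (m:ℝ))) ^ 2 * ((i : ℝ) + 1) ^ (1 + 2 * α) * counterSignalSq σ β M n m i
      * Real.log ((i : ℝ) + 1) / ((n / (σ ^ 2 * (m:ℝ))) + ((i : ℝ) + 1) ^ (1 + 2 * α)) ^ 2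


/-- Bound on the marginal-likelihood functional below the true smoothness (used in
Lemma 1): for every `σ, β, M > 0` there exist `C > 0` and `K > 0` such that for all
integers `m ≥ K` and all reals `n` with `n/m ≥ K`, for every `0 < α < β` one has
`h_k(α) ≤ C M²`, where `k = n/(σ² m)` and `θ₀` is the difficult signal. -/
theorem hFun_bound_below_true_smoothness
    (σ β M : ℝ) (hσ : 0 < σ) (hβ : 0 < β) (hM : 0 < M) :
    ∃ C K : ℝ, 0 < C ∧ 0 < K ∧
      ∀ m : ℕ, K ≤ (m : ℝ) → ∀ n : ℝ, K ≤ n / (m : ℝ) →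
        ∀ α : ℝ, 0 < α → α < β →
          hFun σ β M n m α ≤ C * M ^ 2 := by
  have hσ2 : (0:ℝ) < σ ^ 2 := by positivity
  set X : ℝ := Real.exp 1 + Real.exp (1 / β) + 3 with hXdef
  have hX0 : (0:ℝ) < X := by rw [hXdef]; positivity
  have hC0 : (0:ℝ) < (2:ℝ) ^ β / β * (1 + (1 + 2 * β) / (2 * β)) := by positivity
  have hK0 : (0:ℝ) < σ ^ 2 * X ^ (1 + 2 * β) + σ ^ 2 * Real.exp 1 + 3 := by
    linarith [mul_pos hσ2 (Real.rpow_pos_of_pos hX0 (1 + 2 * β)),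
      mul_pos hσ2 (Real.exp_pos 1)]
  refine ⟨(2:ℝ) ^ β / β * (1 + (1 + 2 * β) / (2 * β)),
    σ ^ 2 * X ^ (1 + 2 * β) + σ ^ 2 * Real.exp 1 + 3, hC0, hK0, ?_⟩
  intro m hm n hn α hα hαβ
  have h2β0 : (0:ℝ) < 1 + 2 * β := by linarith
  have h2α0 : (0:ℝ) < 1 + 2 * α := by linarith
  have hXrp : (0:ℝ) ≤ σ ^ 2 * X ^ (1 + 2 * β) := by
    positivity
  have hXe : (0:ℝ) ≤ σ ^ 2 * Real.exp 1 := by positivity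
  -- facts about m
  have hm3 : (3:ℝ) ≤ (m:ℝ) := by linarith
  have hm0 : (0:ℝ) < (m:ℝ) := by linarith
  have hm1 : (1:ℝ) ≤ (m:ℝ) := by linarith
  have hsqm1 : (1:ℝ) ≤ Real.sqrt m := by
    rw [show (1:ℝ) = Real.sqrt 1 from Real.sqrt_one.symm]
    exact Real.sqrt_le_sqrt (by linarith)
  have hsqm0 : (0:ℝ) < Real.sqrt m := lt_of_lt_of_le one_pos hsqm1
  -- facts about k
  set k : ℝ := n / (σ ^ 2 * (m:ℝ)) with hkdef
  have hk_eq : k = (n / (m:ℝ)) / σ ^ 2 := by rw [hkdef, div_div, mul_comm]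
  have hKk : (σ ^ 2 * X ^ (1 + 2 * β) + σ ^ 2 * Real.exp 1 + 3) / σ ^ 2 ≤ k := by
    rw [hk_eq]
    gcongr
  have hek : Real.exp 1 ≤ k := by
    refine le_trans ?_ hKk
    rw [le_div_iff₀ hσ2]; linarith [hXrp]
  have hk1 : (1:ℝ) ≤ k := le_trans (Real.one_le_exp zero_le_one) hek
  have hk0 : (0:ℝ) < k := lt_of_lt_of_le one_pos hk1
  have hlogk : (1:ℝ) ≤ Real.log k := by
    have h := Real.log_le_log (Real.exp_pos 1) hek
    rwa [Real.log_exp] at h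
  have hlogk0 : (0:ℝ) < Real.log k := lt_of_lt_of_le one_pos hlogk
  -- the threshold
  set T : ℝ := n / (σ ^ 2 * Real.sqrt m) with hTdef
  have hms : Real.sqrt m * Real.sqrt m = (m:ℝ) := Real.mul_self_sqrt hm0.le
  have hT : T = k * Real.sqrt m := by
    rw [hTdef, hkdef, div_mul_eq_mul_div, div_eq_div_iff (by positivity) (by positivity)]
    linear_combination (-(n * σ ^ 2)) * Real.sq_sqrt hm0.le
  have hT0 : (0:ℝ) < T := by rw [hT]; exact mul_pos hk0 hsqm0
  have hTX : X ^ (1 + 2 * β) ≤ T := by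
    have h1 : X ^ (1 + 2 * β) ≤ (σ ^ 2 * X ^ (1 + 2 * β) + σ ^ 2 * Real.exp 1 + 3) / σ ^ 2 := by
      rw [le_div_iff₀ hσ2]; linarith [hXe]
    have h2 : k ≤ k * Real.sqrt m := by
      linarith [mul_nonneg (sub_nonneg.2 hsqm1) hk0.le, mul_comm k (Real.sqrt (m:ℝ))]
    rw [hT]; exact le_trans (le_trans h1 hKk) h2
  set i₀ : ℝ := T ^ (1 / (1 + 2 * β)) with hi0def
  have hi0X : X ≤ i₀ := by
    have h' : (X ^ (1 + 2 * β)) ^ ((1:ℝ) / (1 + 2 * β)) ≤ T ^ (1 / (1 + 2 * β)) :=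
      Real.rpow_le_rpow (by positivity) hTX (by positivity)
    rwa [← Real.rpow_mul hX0.le, mul_one_div, div_self (ne_of_gt h2β0), Real.rpow_one] at h'
  have hX3 : (3:ℝ) ≤ X := by
    rw [hXdef]; linarith [Real.exp_pos 1, Real.exp_pos (1 / β)]
  have hi0_3 : (3:ℝ) ≤ i₀ := le_trans hX3 hi0X
  have hi0pos : (0:ℝ) < i₀ := by linarith
  have hXe1 : Real.exp 1 ≤ X := by rw [hXdef]; linarith [Real.exp_pos (1 / β)]
  have hXeβ : Real.exp (1 / β) ≤ X := by rw [hXdef]; linarith [Real.exp_pos 1]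
  have hlogi0_1 : (1:ℝ) ≤ Real.log i₀ := by
    have h := Real.log_le_log (Real.exp_pos 1) (le_trans hXe1 hi0X)
    rwa [Real.log_exp] at h
  have hlogi0_β : 1 / β ≤ Real.log i₀ := by
    have h := Real.log_le_log (Real.exp_pos (1 / β)) (le_trans hXeβ hi0X)
    rwa [Real.log_exp] at h
  have hlogi0_0 : (0:ℝ) < Real.log i₀ := lt_of_lt_of_le one_pos hlogi0_1
  -- the constant c and the comparison sequence G
  set c : ℝ := k * M ^ 2 * Real.log i₀ * i₀ ^ (-β) with hcdef
  have hc0 : (0:ℝ) ≤ c := by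
    rw [hcdef]
    exact mul_nonneg (mul_nonneg (mul_nonneg hk0.le (by positivity)) hlogi0_0.le)
      (Real.rpow_nonneg hi0pos.le _)
  have hGbase : ∀ i : ℕ, (0:ℝ) < max ((i:ℝ)) (i₀ - 1) :=
    fun i => lt_of_lt_of_le (by linarith) (le_max_right _ _)
  -- nonnegativity of the terms
  have hcs_nonneg : ∀ i : ℕ, 0 ≤ counterSignalSq σ β M n m i := by
    intro i
    unfold counterSignalSq
    split_ifs with h
    · positivity
    · exact le_refl 0
  have hxpos : ∀ i : ℕ, (0:ℝ) < (i:ℝ) + 1 := fun i => by positivity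
  have hx1le : ∀ i : ℕ, (1:ℝ) ≤ (i:ℝ) + 1 := fun i => by
    have := Nat.cast_nonneg (α := ℝ) i; linarith
  have hlogx : ∀ i : ℕ, 0 ≤ Real.log ((i:ℝ) + 1) := fun i => Real.log_nonneg (hx1le i)
  have hf_nonneg : ∀ i : ℕ, 0 ≤ auxF σ β M n m α i := by
    intro i
    unfold auxF
    apply div_nonneg _ (by positivity)
    exact mul_nonneg (mul_nonneg (by positivity) (hcs_nonneg i)) (hlogx i)
  -- the per-term bound
  have hterm : ∀ i : ℕ, auxF σ β M n m α i ≤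
      c * ((1/β) * (max ((i:ℝ)) (i₀ - 1)) ^ (-β)) -
      c * ((1/β) * (max (((i+1:ℕ)):ℝ) (i₀ - 1)) ^ (-β)) := by
    intro i
    have hGanti : (1/β) * (max (((i+1:ℕ)):ℝ) (i₀ - 1)) ^ (-β) ≤
        (1/β) * (max ((i:ℝ)) (i₀ - 1)) ^ (-β) := by
      apply mul_le_mul_of_nonneg_left _ (by positivity)
      apply aux_rpow_anti (hGbase i) _ hβ.le
      apply max_le_max _ le_rfl
      push_cast; linarith
    unfold auxF counterSignalSq
    rw [← hkdef, ← hTdef, ← hi0def]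
    by_cases hcase : i₀ ≤ (i:ℝ) + 1
    · rw [if_pos hcase]
      have hxp : (0:ℝ) < ((i:ℝ) + 1) ^ (1 + 2 * α) := Real.rpow_pos_of_pos (hxpos i) _
      have hA : k ^ 2 * ((i:ℝ) + 1) ^ (1 + 2 * α) / (k + ((i:ℝ) + 1) ^ (1 + 2 * α)) ^ 2 ≤ k :=
        aux_ratio_le hk0 hxp
      have hB : Real.log ((i:ℝ) + 1) ≤ Real.log i₀ * (((i:ℝ) + 1) / i₀) ^ β :=
        aux_log_growth hβ hlogi0_β hi0pos hcase
      have hxβ : (((i:ℝ) + 1) / i₀) ^ β = ((i:ℝ) + 1) ^ β * (i₀ ^ β)⁻¹ := by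
        rw [Real.div_rpow (hxpos i).le hi0pos.le, div_eq_mul_inv]
      have hi0β : i₀ ^ (-β) = (i₀ ^ β)⁻¹ := Real.rpow_neg hi0pos.le β
      have hxcomb : ((i:ℝ) + 1) ^ (-1 - 2 * β) * ((i:ℝ) + 1) ^ β = ((i:ℝ) + 1) ^ (-1 - β) := by
        rw [← Real.rpow_add (hxpos i)]; congr 1; ring
      have hi2 : (2:ℝ) ≤ (i:ℝ) := by linarith
      have hC : ((i:ℝ) + 1) ^ (-1 - β) ≤ (1/β) * (((i:ℝ)) ^ (-β) - ((i:ℝ) + 1) ^ (-β)) :=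
        aux_step_ineq (by linarith : (0:ℝ) < (i:ℝ)) hβ
      have hmax1 : max ((i:ℝ)) (i₀ - 1) = (i:ℝ) := max_eq_left (by linarith)
      have hmax2 : max (((i+1:ℕ)):ℝ) (i₀ - 1) = (i:ℝ) + 1 := by
        push_cast; exact max_eq_left (by linarith)
      rw [hmax1, hmax2]
      have hlast : c * ((1/β) * ((i:ℝ)) ^ (-β)) - c * ((1/β) * ((i:ℝ) + 1) ^ (-β)) =
          c * ((1/β) * (((i:ℝ)) ^ (-β) - ((i:ℝ) + 1) ^ (-β))) := by ring
      rw [hlast]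
      calc k ^ 2 * ((i:ℝ) + 1) ^ (1 + 2 * α) * (M ^ 2 * ((i:ℝ) + 1) ^ (-1 - 2 * β))
            * Real.log ((i:ℝ) + 1) / (k + ((i:ℝ) + 1) ^ (1 + 2 * α)) ^ 2
          = (k ^ 2 * ((i:ℝ) + 1) ^ (1 + 2 * α) / (k + ((i:ℝ) + 1) ^ (1 + 2 * α)) ^ 2) *
            (M ^ 2 * ((i:ℝ) + 1) ^ (-1 - 2 * β) * Real.log ((i:ℝ) + 1)) := by ring
        _ ≤ k * (M ^ 2 * ((i:ℝ) + 1) ^ (-1 - 2 * β) * Real.log ((i:ℝ) + 1)) := by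
            apply mul_le_mul_of_nonneg_right hA
            exact mul_nonneg (mul_nonneg (by positivity)
              (Real.rpow_nonneg (hxpos i).le _)) (hlogx i)
        _ ≤ k * (M ^ 2 * ((i:ℝ) + 1) ^ (-1 - 2 * β) *
              (Real.log i₀ * (((i:ℝ) + 1) / i₀) ^ β)) := by
            apply mul_le_mul_of_nonneg_left _ hk0.le
            exact mul_le_mul_of_nonneg_left hB
              (mul_nonneg (by positivity) (Real.rpow_nonneg (hxpos i).le _))
        _ = c * (((i:ℝ) + 1) ^ (-1 - β)) := by
            rw [hcdef, hxβ, hi0β, ← hxcomb]; ring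
        _ ≤ c * ((1/β) * (((i:ℝ)) ^ (-β) - ((i:ℝ) + 1) ^ (-β))) :=
            mul_le_mul_of_nonneg_left hC hc0
    · rw [if_neg hcase]
      have hz : k ^ 2 * ((i:ℝ) + 1) ^ (1 + 2 * α) * 0 * Real.log ((i:ℝ) + 1) /
          (k + ((i:ℝ) + 1) ^ (1 + 2 * α)) ^ 2 = 0 := by ring
      rw [hz]
      have h2 := mul_le_mul_of_nonneg_left hGanti hc0
      linarith
  -- sum the telescoping bound
  have hG0nn : ∀ i : ℕ, 0 ≤ c * ((1/β) * (max ((i:ℝ)) (i₀ - 1)) ^ (-β)) := by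
    intro i
    exact mul_nonneg hc0 (mul_nonneg (by positivity) (Real.rpow_nonneg (hGbase i).le _))
  have htsum : ∑' i : ℕ, auxF σ β M n m α i ≤
      c * ((1/β) * (max ((0:ℕ):ℝ) (i₀ - 1)) ^ (-β)) := by
    apply tsum_le_of_sum_le' (hG0nn 0)
    intro u
    exact aux_finsum_bound (G := fun i : ℕ => c * ((1/β) * (max ((i:ℝ)) (i₀ - 1)) ^ (-β)))
      hf_nonneg hterm hG0nn u
  have hmax0 : max ((0:ℕ):ℝ) (i₀ - 1) = i₀ - 1 := by
    rw [Nat.cast_zero]; exact max_eq_right (by linarith)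
  rw [hmax0] at htsum
  -- bound (i₀-1)^(-β) by 2^β i₀^(-β)
  have hG0bound : (i₀ - 1) ^ (-β) ≤ (2:ℝ) ^ β * i₀ ^ (-β) := by
    have h1 : i₀ / 2 ≤ i₀ - 1 := by linarith
    have h2 : (i₀ - 1) ^ (-β) ≤ (i₀ / 2) ^ (-β) :=
      aux_rpow_anti (by linarith : (0:ℝ) < i₀ / 2) h1 hβ.le
    have h3 : (i₀ / 2) ^ (-β) = (2:ℝ) ^ β * i₀ ^ (-β) := by
      rw [Real.div_rpow hi0pos.le (by norm_num) (-β), Real.rpow_neg (by norm_num : (0:ℝ) ≤ 2),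
        div_eq_mul_inv, inv_inv]
      ring
    rw [← h3]; exact h2
  have htsum2 : ∑' i : ℕ, auxF σ β M n m α i ≤ c * ((1/β) * ((2:ℝ) ^ β * i₀ ^ (-β))) := by
    refine le_trans htsum ?_
    apply mul_le_mul_of_nonneg_left _ hc0
    exact mul_le_mul_of_nonneg_left hG0bound (by positivity)
  -- prefactor
  have hkq : (0:ℝ) < k ^ (1/(1 + 2 * α)) := Real.rpow_pos_of_pos hk0 _
  have hP0 : (0:ℝ) ≤ (1 + 2 * α) / (k ^ (1/(1 + 2 * α)) * Real.log k) :=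
    div_nonneg (by linarith) (mul_nonneg hkq.le hlogk0.le)
  have hF : hFun σ β M n m α = ((1 + 2 * α) / (k ^ (1/(1 + 2 * α)) * Real.log k)) *
      ∑' i : ℕ, auxF σ β M n m α i := rfl
  rw [hF]
  have hstep : ((1 + 2 * α) / (k ^ (1/(1 + 2 * α)) * Real.log k)) *
      ∑' i : ℕ, auxF σ β M n m α i ≤
      ((1 + 2 * α) / (k ^ (1/(1 + 2 * α)) * Real.log k)) *
      (c * ((1/β) * ((2:ℝ) ^ β * i₀ ^ (-β)))) :=
    mul_le_mul_of_nonneg_left htsum2 hP0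
  refine le_trans hstep ?_
  -- final algebra
  have hii : i₀ ^ (-β) * i₀ ^ (-β) =
      k ^ (-(2 * β / (1 + 2 * β))) * (m:ℝ) ^ (-(β / (1 + 2 * β))) := by
    have ha : i₀ ^ (-β) * i₀ ^ (-β) = i₀ ^ (-(2 * β)) := by
      rw [← Real.rpow_add hi0pos]; congr 1; ring
    have hb : i₀ ^ (-(2 * β)) = T ^ ((1 / (1 + 2 * β)) * (-(2 * β))) := by
      rw [hi0def, ← Real.rpow_mul hT0.le]
    have hcc : (1 / (1 + 2 * β)) * (-(2 * β)) = -(2 * β / (1 + 2 * β)) := by ring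
    have hd : T ^ (-(2 * β / (1 + 2 * β))) =
        k ^ (-(2 * β / (1 + 2 * β))) * (Real.sqrt m) ^ (-(2 * β / (1 + 2 * β))) := by
      rw [hT, Real.mul_rpow hk0.le (Real.sqrt_nonneg _)]
    have he : (Real.sqrt m) ^ (-(2 * β / (1 + 2 * β))) = (m:ℝ) ^ (-(β / (1 + 2 * β))) := by
      rw [Real.sqrt_eq_rpow, ← Real.rpow_mul hm0.le]
      congr 1; ring
    rw [ha, hb, hcc, hd, he]
  have hlogi0eq : Real.log i₀ = (Real.log k + Real.log m / 2) / (1 + 2 * β) := by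
    rw [hi0def, Real.log_rpow hT0, hT, Real.log_mul (ne_of_gt hk0) (ne_of_gt hsqm0),
      Real.log_sqrt hm0.le]
    ring
  have hDdef : k ^ ((1 - 1/(1 + 2 * α)) + -(2 * β / (1 + 2 * β))) =
      k * k ^ (-(2 * β / (1 + 2 * β))) / k ^ (1/(1 + 2 * α)) := by
    rw [Real.rpow_add hk0, Real.rpow_sub hk0, Real.rpow_one]
    ring
  have hEQ : ((1 + 2 * α) / (k ^ (1/(1 + 2 * α)) * Real.log k)) *
      (c * ((1/β) * ((2:ℝ) ^ β * i₀ ^ (-β)))) =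
      M ^ 2 * ((2:ℝ) ^ β / β) * ((1 + 2 * α) / (1 + 2 * β)) *
        (k ^ ((1 - 1/(1 + 2 * α)) + -(2 * β / (1 + 2 * β))) *
          ((m:ℝ) ^ (-(β / (1 + 2 * β))) * (Real.log k + Real.log m / 2))) / Real.log k := by
    rw [hcdef, hlogi0eq, hDdef]
    have hgather : k * M ^ 2 * ((Real.log k + Real.log m / 2) / (1 + 2 * β)) * i₀ ^ (-β) *
        ((1/β) * ((2:ℝ) ^ β * i₀ ^ (-β))) =
        k * M ^ 2 * ((Real.log k + Real.log m / 2) / (1 + 2 * β)) *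
        ((1/β) * (2:ℝ) ^ β) * (i₀ ^ (-β) * i₀ ^ (-β)) := by ring
    rw [hgather, hii]
    field_simp
  rw [hEQ]
  -- bound the three factors
  have hD1 : k ^ ((1 - 1/(1 + 2 * α)) + -(2 * β / (1 + 2 * β))) ≤ 1 := by
    apply Real.rpow_le_one_of_one_le_of_nonpos hk1
    have e1 : 1 - 1/(1 + 2 * α) = 2 * α / (1 + 2 * α) := by field_simp; ring
    have hcmp : 2 * α / (1 + 2 * α) ≤ 2 * β / (1 + 2 * β) := by
      rw [div_le_div_iff₀ h2α0 h2β0]; linarith [mul_nonneg hα.le hβ.le, hαβ, mul_le_mul_of_nonneg_left hαβ.le (by linarith : (0:ℝ) ≤ 2*α)]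
    rw [e1]; linarith
  have hD0 : (0:ℝ) ≤ k ^ ((1 - 1/(1 + 2 * α)) + -(2 * β / (1 + 2 * β))) :=
    (Real.rpow_pos_of_pos hk0 _).le
  have hs0 : (0:ℝ) < β / (1 + 2 * β) := by positivity
  have hms0 : (0:ℝ) ≤ (m:ℝ) ^ (-(β / (1 + 2 * β))) := (Real.rpow_pos_of_pos hm0 _).le
  have hms1 : (m:ℝ) ^ (-(β / (1 + 2 * β))) ≤ 1 :=
    Real.rpow_le_one_of_one_le_of_nonpos hm1 (neg_nonpos.2 hs0.le)
  have hlm0 : (0:ℝ) ≤ Real.log m := Real.log_nonneg hm1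
  have hmslog : (m:ℝ) ^ (-(β / (1 + 2 * β))) * Real.log m ≤ (1 + 2 * β) / β := by
    have h1 : Real.log ((m:ℝ) ^ (β / (1 + 2 * β))) ≤ (m:ℝ) ^ (β / (1 + 2 * β)) - 1 :=
      Real.log_le_sub_one_of_pos (Real.rpow_pos_of_pos hm0 _)
    rw [Real.log_rpow hm0] at h1
    have h2 : Real.log m ≤ (m:ℝ) ^ (β / (1 + 2 * β)) / (β / (1 + 2 * β)) := by
      rw [le_div_iff₀ hs0]; linarith [h1]
    have h3 : (m:ℝ) ^ (-(β / (1 + 2 * β))) * (m:ℝ) ^ (β / (1 + 2 * β)) = 1 := by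
      rw [← Real.rpow_add hm0, neg_add_cancel, Real.rpow_zero]
    calc (m:ℝ) ^ (-(β / (1 + 2 * β))) * Real.log m
        ≤ (m:ℝ) ^ (-(β / (1 + 2 * β))) * ((m:ℝ) ^ (β / (1 + 2 * β)) / (β / (1 + 2 * β))) :=
          mul_le_mul_of_nonneg_left h2 hms0
      _ = ((m:ℝ) ^ (-(β / (1 + 2 * β))) * (m:ℝ) ^ (β / (1 + 2 * β))) / (β / (1 + 2 * β)) := by
          ring
      _ = 1 / (β / (1 + 2 * β)) := by rw [h3]
      _ = (1 + 2 * β) / β := one_div_div _ _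
  have hR : (m:ℝ) ^ (-(β / (1 + 2 * β))) * (Real.log k + Real.log m / 2) ≤
      (1 + (1 + 2 * β) / (2 * β)) * Real.log k := by
    have t1 : (m:ℝ) ^ (-(β / (1 + 2 * β))) * Real.log k ≤ Real.log k := by
      linarith [mul_nonneg (sub_nonneg.2 hms1) hlogk0.le]
    have t2 : (m:ℝ) ^ (-(β / (1 + 2 * β))) * (Real.log m / 2) ≤ (1 + 2 * β) / (2 * β) := by
      have : (1 + 2 * β) / (2 * β) = ((1 + 2 * β) / β) / 2 := by ring
      rw [this]; linarith
    have t3 : (1 + 2 * β) / (2 * β) ≤ (1 + 2 * β) / (2 * β) * Real.log k := by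
      linarith [mul_nonneg (show (0:ℝ) ≤ (1 + 2 * β) / (2 * β) by positivity)
        (sub_nonneg.2 hlogk)]
    linarith [t1, t2, t3]
  have hR0 : (0:ℝ) ≤ (m:ℝ) ^ (-(β / (1 + 2 * β))) * (Real.log k + Real.log m / 2) := by
    apply mul_nonneg hms0; linarith
  have hfrac1 : (1 + 2 * α) / (1 + 2 * β) ≤ 1 := by
    rw [div_le_one h2β0]; linarith
  have hfrac0 : (0:ℝ) ≤ (1 + 2 * α) / (1 + 2 * β) := by positivity
  have hDR : k ^ ((1 - 1/(1 + 2 * α)) + -(2 * β / (1 + 2 * β))) *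
      ((m:ℝ) ^ (-(β / (1 + 2 * β))) * (Real.log k + Real.log m / 2)) ≤
      1 * ((1 + (1 + 2 * β) / (2 * β)) * Real.log k) :=
    mul_le_mul hD1 hR hR0 zero_le_one
  have hfDR : ((1 + 2 * α) / (1 + 2 * β)) *
      (k ^ ((1 - 1/(1 + 2 * α)) + -(2 * β / (1 + 2 * β))) *
        ((m:ℝ) ^ (-(β / (1 + 2 * β))) * (Real.log k + Real.log m / 2))) ≤
      1 * (1 * ((1 + (1 + 2 * β) / (2 * β)) * Real.log k)) :=
    mul_le_mul hfrac1 hDR (mul_nonneg hD0 hR0) zero_le_one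
  have hnum : M ^ 2 * ((2:ℝ) ^ β / β) * (((1 + 2 * α) / (1 + 2 * β)) *
      (k ^ ((1 - 1/(1 + 2 * α)) + -(2 * β / (1 + 2 * β))) *
        ((m:ℝ) ^ (-(β / (1 + 2 * β))) * (Real.log k + Real.log m / 2)))) ≤
      M ^ 2 * ((2:ℝ) ^ β / β) * (1 * (1 * ((1 + (1 + 2 * β) / (2 * β)) * Real.log k))) :=
    mul_le_mul_of_nonneg_left hfDR (by positivity)
  rw [div_le_iff₀ hlogk0]
  calc M ^ 2 * ((2:ℝ) ^ β / β) * ((1 + 2 * α) / (1 + 2 * β)) *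
        (k ^ ((1 - 1/(1 + 2 * α)) + -(2 * β / (1 + 2 * β))) *
          ((m:ℝ) ^ (-(β / (1 + 2 * β))) * (Real.log k + Real.log m / 2)))
      = M ^ 2 * ((2:ℝ) ^ β / β) * (((1 + 2 * α) / (1 + 2 * β)) *
        (k ^ ((1 - 1/(1 + 2 * α)) + -(2 * β / (1 + 2 * β))) *
          ((m:ℝ) ^ (-(β / (1 + 2 * β))) * (Real.log k + Real.log m / 2)))) := by ring
    _ ≤ M ^ 2 * ((2:ℝ) ^ β / β) * (1 * (1 * ((1 + (1 + 2 * β) / (2 * β)) * Real.log k))) :=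
        hnum
    _ = (2:ℝ) ^ β / β * (1 + (1 + 2 * β) / (2 * β)) * M ^ 2 * Real.log k := by ring
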